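/- Let Γ be an (n,k)-type GKM-graph whose underlying graph has finitely many vertices. If Γ is (k+1)-complete and there exists a k-face Ξ of Γ such that every transversal edge to Ξ is a chord of Ξ, then Γ has no nontrivial extensions. -/
import Mathlib


/-- The star of a set `F` of (directed) edges at a vertex `v`:
all edges in `F` with initial vertex `v`. -/
def edgeStar {V : Type} (F : Set (V × V)) (v : V) : Set (V × V) :=
  {e ∈ F | e.1 = v}

/-- A GKM-graph on the vertex type `V`, with connection `nabla` and axial
function `alpha` taking values in `ℤ^k`.  Edges are ordered pairs of distinct
vertices; the edge set is closed under reversal and the underlying graph is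
connected.  The connection `∇_e` restricts to a bijection from the star of
`i(e)` onto the star of `t(e)` sending `e` to its reversal, and the axial
function satisfies the rank, opposite sign and congruence conditions. -/
structure GKMGraph (V : Type) (k : ℕ) : Type where
  E : Set (V × V)
  nabla : V × V → V × V → V × V
  alpha : V × V → Fin k → ℤ
  vert_nonempty : Nonempty V
  no_loops : ∀ e ∈ E, e.1 ≠ e.2
  rev_mem : ∀ e ∈ E, (e.2, e.1) ∈ E
  graph_connected : ∀ u v : V, Relation.ReflTransGen (fun a b => (a, b) ∈ E) u v
  nabla_bijOn : ∀ e ∈ E, Set.BijOn (nabla e) (edgeStar E e.1) (edgeStar E e.2)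
  nabla_self : ∀ e ∈ E, nabla e e = (e.2, e.1)
  rank : ∀ v : V, Submodule.span ℤ (alpha '' edgeStar E v) = ⊤
  opposite : ∀ e ∈ E, alpha (e.2, e.1) = -alpha e
  congruence : ∀ e ∈ E, ∀ e' ∈ E, e'.1 = e.1 →
    ∃ c : ℤ, alpha (nabla e e') = alpha e' + c • alpha e

namespace GKMGraph

variable {V : Type} {k : ℕ}

/-- The star of the GKM-graph `Γ` at a vertex `v`. -/
def star (Γ : GKMGraph V k) (v : V) : Set (V × V) := edgeStar Γ.E v

/-- `Γ.IsFace W F` : the subgraph with vertex set `W` and edge set `F` is a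
face (totally geodesic subgraph) of `Γ`: it is a nonempty connected regular
subgraph closed under edge reversal and invariant under the connection. -/
structure IsFace (Γ : GKMGraph V k) (W : Set V) (F : Set (V × V)) : Prop where
  nonempty : W.Nonempty
  sub : F ⊆ Γ.E
  src_mem : ∀ e ∈ F, e.1 ∈ W
  tgt_mem : ∀ e ∈ F, e.2 ∈ W
  rev_mem : ∀ e ∈ F, (e.2, e.1) ∈ F
  connected : ∀ u ∈ W, ∀ v ∈ W, Relation.ReflTransGen (fun a b => (a, b) ∈ F) u v
  invariant : ∀ e ∈ F, ∀ e' ∈ F, e'.1 = e.1 → Γ.nabla e e' ∈ F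
  regular : ∃ r : ℕ, ∀ v ∈ W, (edgeStar F v).Finite ∧ (edgeStar F v).ncard = r

/-- `Γ.IsNFace W F r` : the subgraph `(W, F)` is an `r`-face of `Γ`,
i.e. a face all of whose stars have exactly `r` elements. -/
def IsNFace (Γ : GKMGraph V k) (W : Set V) (F : Set (V × V)) (r : ℕ) : Prop :=
  Γ.IsFace W F ∧ ∀ v ∈ W, (edgeStar F v).Finite ∧ (edgeStar F v).ncard = r

/-- The span `α⟨Ξ⟩` of a face with edge set `F`, computed at the vertex `v`. -/
def faceSpan (Γ : GKMGraph V k) (F : Set (V × V)) (v : V) : Submodule ℤ (Fin k → ℤ) :=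
  Submodule.span ℤ (Γ.alpha '' edgeStar F v)

/-- `Π_γ`, the composite `∇_{e_r} ∘ ⋯ ∘ ∇_{e_1}` of the connection along the
edge path `γ = (e_1, …, e_r)`, applied to an edge `e`. -/
def transport (Γ : GKMGraph V k) (γ : List (V × V)) (e : V × V) : V × V :=
  γ.foldl (fun x g => Γ.nabla g x) e

/-- An edge of `Γ` transversal to the subgraph `(W, F)`:
it emanates from a vertex of `W` but does not belong to `F`. -/
def IsTransversal (Γ : GKMGraph V k) (W : Set V) (F : Set (V × V)) (e : V × V) : Prop :=
  e ∈ Γ.E ∧ e ∉ F ∧ e.1 ∈ W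

/-- A chord of the subgraph `(W, F)`: a transversal edge both of whose
endpoints lie in `W`. -/
def IsChord (Γ : GKMGraph V k) (W : Set V) (F : Set (V × V)) (e : V × V) : Prop :=
  Γ.IsTransversal W F e ∧ e.2 ∈ W

/-- `Γ` is `j`-independent: the values of the axial function on any `j`
distinct edges with a common origin are linearly independent over `ℤ`. -/
def IsIndependent (Γ : GKMGraph V k) (j : ℕ) : Prop :=
  ∀ v : V, ∀ s : Finset (V × V), ↑s ⊆ Γ.star v → s.card = j →
    LinearIndependent ℤ (fun e : {x : V × V // x ∈ s} => Γ.alpha e.1)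

/-- `Γ` is `j`-complete: any `i ≤ j` distinct edges with a common origin `v`
form the star at `v` of some `i`-face of `Γ`. -/
def IsComplete (Γ : GKMGraph V k) (j : ℕ) : Prop :=
  ∀ v : V, ∀ i : ℕ, i ≤ j → ∀ s : Finset (V × V), ↑s ⊆ Γ.star v → s.card = i →
    ∃ (W : Set V) (F : Set (V × V)), Γ.IsNFace W F i ∧ v ∈ W ∧ edgeStar F v = ↑s

/-- `Γ` is `n`-valent: every star of `Γ` has exactly `n` elements. -/
def IsValent (Γ : GKMGraph V k) (n : ℕ) : Prop :=
  ∀ v : V, (Γ.star v).Finite ∧ (Γ.star v).ncard = n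

/-- `Γ'` is an extension of `Γ`: both GKM-graphs have the same underlying
graph and the same connection, and there is a surjective homomorphism
`p : ℤ^{k'} → ℤ^k` with `p ∘ α' = α` on all edges. -/
def IsExtension {k' : ℕ} (Γ' : GKMGraph V k') (Γ : GKMGraph V k) : Prop :=
  Γ'.E = Γ.E ∧
  (∀ e ∈ Γ.E, ∀ e' ∈ Γ.E, e'.1 = e.1 → Γ'.nabla e e' = Γ.nabla e e') ∧
  ∃ p : (Fin k' → ℤ) →ₗ[ℤ] (Fin k → ℤ), Function.Surjective p ∧
    ∀ e ∈ Γ.E, p (Γ'.alpha e) = Γ.alpha e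

end GKMGraph

/-- An edge path contained in the edge set `F`: consecutive edges are
composable (`t(e_m) = i(e_{m+1})`). -/
def IsEdgePathIn {V : Type} (F : Set (V × V)) (γ : List (V × V)) : Prop :=
  (∀ g ∈ γ, g ∈ F) ∧ γ.Chain' (fun g h => g.2 = h.1)


section Aux

lemma mem_edgeStar {V : Type} {F : Set (V × V)} {u : V} {x : V × V} :
    x ∈ edgeStar F u ↔ x ∈ F ∧ x.1 = u := Iff.rfl

namespace GKMGraph
variable {V : Type} {k : ℕ}

lemma nabla_src (Γ : GKMGraph V k) {g x : V × V} (hg : g ∈ Γ.E) (hx : x ∈ Γ.E)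
    (h1 : x.1 = g.1) : Γ.nabla g x ∈ Γ.E ∧ (Γ.nabla g x).1 = g.2 :=
  (Γ.nabla_bijOn g hg).mapsTo ⟨hx, h1⟩

lemma IsNFace.star_bijOn {Γ : GKMGraph V k} {W : Set V} {F : Set (V × V)} {r : ℕ}
    (hF : Γ.IsNFace W F r) {g : V × V} (hg : g ∈ F) :
    Set.BijOn (Γ.nabla g) (edgeStar F g.1) (edgeStar F g.2) := by
  have hgE : g ∈ Γ.E := hF.1.sub hg
  have hb := Γ.nabla_bijOn g hgE
  have hsubE : ∀ u, edgeStar F u ⊆ edgeStar Γ.E u := fun u x hx => ⟨hF.1.sub hx.1, hx.2⟩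
  have hmaps : Set.MapsTo (Γ.nabla g) (edgeStar F g.1) (edgeStar F g.2) := by
    intro x hx
    exact ⟨hF.1.invariant g hg x hx.1 hx.2, (hb.mapsTo (hsubE _ hx)).2⟩
  have hinj : Set.InjOn (Γ.nabla g) (edgeStar F g.1) := hb.injOn.mono (hsubE g.1)
  have h1 := hF.2 g.1 (hF.1.src_mem g hg)
  have h2 := hF.2 g.2 (hF.1.tgt_mem g hg)
  have himg : Γ.nabla g '' edgeStar F g.1 = edgeStar F g.2 :=
    Set.eq_of_subset_of_ncard_le hmaps.image_subset
      (by rw [Set.ncard_image_of_injOn hinj, h1.2, h2.2]) h2.1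
  exact ⟨hmaps, hinj, himg.ge⟩

lemma IsNFace.nabla_notMem {Γ : GKMGraph V k} {W : Set V} {F : Set (V × V)} {r : ℕ}
    (hF : Γ.IsNFace W F r) {g x : V × V} (hg : g ∈ F) (hxE : x ∈ Γ.E)
    (h1 : x.1 = g.1) (hx : x ∉ F) : Γ.nabla g x ∉ F := by
  intro hmem
  have hsrc : (Γ.nabla g x).1 = g.2 := (Γ.nabla_src (hF.1.sub hg) hxE h1).2
  obtain ⟨g', hg', heq⟩ := (hF.star_bijOn hg).surjOn
    (⟨hmem, hsrc⟩ : Γ.nabla g x ∈ edgeStar F g.2)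
  have hgx : g' = x := (Γ.nabla_bijOn g (hF.1.sub hg)).injOn
    ⟨hF.1.sub hg'.1, hg'.2⟩ ⟨hxE, h1⟩ heq
  exact hx (hgx ▸ hg'.1)

end GKMGraph

/-- Coordinatewise cast `ℤ^m → ℚ^m` as a `ℤ`-linear map. -/
def ratCastLM (m : ℕ) : (Fin m → ℤ) →ₗ[ℤ] (Fin m → ℚ) where
  toFun x i := (x i : ℚ)
  map_add' x y := by funext i; simp
  map_smul' c x := by funext i; simp

@[simp] lemma ratCastLM_apply {m : ℕ} (x : Fin m → ℤ) (i : Fin m) :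
    ratCastLM m x i = (x i : ℚ) := rfl

end Aux

/-- an `(n,k)`-type GKM-graph with finitely many vertices which
is `(k+1)`-complete and possesses a `k`-face all of whose transversal edges
are chords has no nontrivial extensions. -/
theorem no_nontrivial_extensions_of_chord_face {V : Type} [Finite V] {n k : ℕ}
    (Γ : GKMGraph V k) (hval : Γ.IsValent n) (hcomp : Γ.IsComplete (k + 1))
    (W : Set V) (F : Set (V × V)) (hF : Γ.IsNFace W F k)
    (hch : ∀ e : V × V, Γ.IsTransversal W F e → Γ.IsChord W F e) :
    ∀ s : ℕ, 0 < s → ¬ ∃ Γ' : GKMGraph V (k + s),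
      Γ'.IsValent n ∧ Γ'.IsExtension Γ := by
  intro s hs
  rintro ⟨Γ', hval', hE, hnab, p, hpsurj, hpa⟩
  classical
  obtain ⟨v, hv⟩ := hF.1.nonempty
  have hFsub : F ⊆ Γ.E := hF.1.sub
  have hcong : ∀ g ∈ Γ.E, ∀ x ∈ Γ.E, x.1 = g.1 →
      ∃ m : ℤ, Γ'.alpha (Γ.nabla g x) = Γ'.alpha x + m • Γ'.alpha g := by
    intro g hg x hx h1
    have hg' : g ∈ Γ'.E := by rw [hE]; exact hg
    have hx' : x ∈ Γ'.E := by rw [hE]; exact hx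
    have h := Γ'.congruence g hg' x hx' h1
    rwa [hnab g hg x hx h1] at h
  set M : Submodule ℤ (Fin (k+s) → ℤ) := Submodule.span ℤ (Γ'.alpha '' edgeStar F v) with hM
  have hspanle : ∀ u ∈ W, Submodule.span ℤ (Γ'.alpha '' edgeStar F u) ≤ M := by
    intro u hu
    have hpath : Relation.ReflTransGen (fun a b => (a, b) ∈ F) v u := hF.1.connected v hv u hu
    clear hu
    induction hpath with
    | refl => exact le_rfl
    | @tail b u hp hstep ih =>
      rw [Submodule.span_le]
      rintro _ ⟨x, hx, rfl⟩
      obtain ⟨x', hx', rfl⟩ := (hF.star_bijOn hstep).surjOn hx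
      obtain ⟨m, hm⟩ := hcong (b, u) (hFsub hstep) x' (hFsub hx'.1) hx'.2
      rw [hm]
      exact add_mem (ih (Submodule.subset_span ⟨x', hx', rfl⟩))
        (Submodule.smul_mem _ m (ih (Submodule.subset_span ⟨(b, u), ⟨hstep, rfl⟩, rfl⟩)))
  have hWfin : W.Finite := Set.toFinite W
  set Wfin := hWfin.toFinset with hWfdef
  have hNpos : 0 < Wfin.card := Finset.card_pos.mpr ⟨v, hWfin.mem_toFinset.mpr hv⟩
  -- key claim: for every chord e at v, |W| • α'(e) ∈ M
  have hkey : ∀ e : V × V, e ∈ Γ.E → e.1 = v → e ∉ F →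
      (Wfin.card : ℤ) • Γ'.alpha e ∈ M := by
    intro e heE he1 heF
    have hsv := hF.2 v hv
    have hesfin : e ∉ hsv.1.toFinset := by
      intro h
      exact heF ((hsv.1.mem_toFinset.mp h).1)
    have hsub : ↑(insert e hsv.1.toFinset) ⊆ Γ.star v := by
      intro x hx
      rcases Finset.mem_insert.mp (Finset.mem_coe.mp hx) with h | h
      · exact h ▸ ⟨heE, he1⟩
      · have h2 := hsv.1.mem_toFinset.mp h
        exact ⟨hFsub h2.1, h2.2⟩
    have hsfcard : (hsv.1.toFinset).card = k :=
      (Set.ncard_eq_toFinset_card _ hsv.1).symm.trans hsv.2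
    have hcard : (insert e hsv.1.toFinset).card = k + 1 := by
      rw [Finset.card_insert_of_notMem hesfin, hsfcard]
    obtain ⟨WT, FT, hT, hvT, hstarT⟩ := hcomp v (k+1) le_rfl _ hsub hcard
    -- every vertex of W is in the face Θ, together with its Ξ-star
    have hQ : ∀ u ∈ W, u ∈ WT ∧ edgeStar F u ⊆ FT := by
      intro u hu
      have hpath := hF.1.connected v hv u hu
      clear hu
      induction hpath with
      | refl =>
        refine ⟨hvT, fun x hx => ?_⟩
        have h3 : x ∈ edgeStar FT v := by
          rw [hstarT]
          exact Finset.mem_coe.mpr (Finset.mem_insert_of_mem (hsv.1.mem_toFinset.mpr hx))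
        exact h3.1
      | @tail b u hp hstep ih =>
        have hgT : (b, u) ∈ FT := ih.2 ⟨hstep, rfl⟩
        refine ⟨hT.1.tgt_mem _ hgT, fun x hx => ?_⟩
        obtain ⟨x', hx', rfl⟩ := (hF.star_bijOn hstep).surjOn hx
        exact hT.1.invariant _ hgT x' (ih.2 hx') hx'.2
    -- at each vertex of W there is a unique Θ-edge outside F
    have hcu : ∀ u ∈ W, ∃! x : V × V, x ∈ edgeStar FT u ∧ x ∉ F := by
      intro u hu
      obtain ⟨huT, husub⟩ := hQ u hu
      have hsubstar : edgeStar F u ⊆ edgeStar FT u := fun x hx => ⟨husub hx, hx.2⟩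
      have hTc := hT.2 u huT
      have hFc := hF.2 u hu
      have hdiff : (edgeStar FT u \ edgeStar F u).ncard = 1 := by
        rw [Set.ncard_diff hsubstar hFc.1, hTc.2, hFc.2]
        omega
      obtain ⟨a, ha⟩ := Set.ncard_eq_one.mp hdiff
      have hiff : ∀ x : V × V, (x ∈ edgeStar FT u ∧ x ∉ F) ↔
          x ∈ edgeStar FT u \ edgeStar F u := by
        intro x
        constructor
        · rintro ⟨h1, h2⟩; exact ⟨h1, fun hc => h2 hc.1⟩
        · rintro ⟨h1, h2⟩; exact ⟨h1, fun hc => h2 ⟨hc, h1.2⟩⟩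
      refine ⟨a, ?_, ?_⟩
      · exact (hiff a).mpr (by rw [ha]; exact rfl)
      · intro y hy
        exact Set.mem_singleton_iff.mp (ha ▸ (hiff y).mp hy)
    have hchoice : ∀ u : V, ∃ x : V × V, u ∈ W → (x ∈ edgeStar FT u ∧ x ∉ F) := by
      intro u
      by_cases hu : u ∈ W
      · obtain ⟨x, hx, -⟩ := hcu u hu
        exact ⟨x, fun _ => hx⟩
      · exact ⟨(u, u), fun h => absurd h hu⟩
    choose ch hchP using hchoice
    have huniq : ∀ u ∈ W, ∀ x : V × V, x ∈ edgeStar FT u → x ∉ F → x = ch u := by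
      intro u hu x h1 h2
      obtain ⟨y, hy, hyu⟩ := hcu u hu
      exact (hyu x ⟨h1, h2⟩).trans (hyu (ch u) (hchP u hu)).symm
    have hchE : ∀ u ∈ W, ch u ∈ Γ.E := fun u hu => hT.1.sub (hchP u hu).1.1
    have hch1 : ∀ u ∈ W, (ch u).1 = u := fun u hu => (hchP u hu).1.2
    have hchF : ∀ u ∈ W, ch u ∉ F := fun u hu => (hchP u hu).2
    have hchW : ∀ u ∈ W, (ch u).2 ∈ W := by
      intro u hu
      exact (hch (ch u) ⟨hchE u hu, hchF u hu, by rw [hch1 u hu]; exact hu⟩).2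
    have hchv : ch v = e := by
      have heT : e ∈ edgeStar FT v := by
        rw [hstarT]
        exact Finset.mem_coe.mpr (Finset.mem_insert_self e _)
      exact (huniq v hv e heT heF).symm
    have hrev : ∀ u ∈ W, ch ((ch u).2) = ((ch u).2, (ch u).1) := by
      intro u hu
      have h1 : ((ch u).2, (ch u).1) ∈ edgeStar FT ((ch u).2) :=
        ⟨hT.1.rev_mem _ (hchP u hu).1.1, rfl⟩
      have h2 : ((ch u).2, (ch u).1) ∉ F := by
        intro hcon
        have h3 := hF.1.rev_mem _ hcon
        exact hchF u hu (by simpa using h3)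
      exact (huniq _ (hchW u hu) _ h1 h2).symm
    have htrans : ∀ u ∈ W, ∀ g ∈ edgeStar F u, Γ.nabla g (ch u) = ch g.2 := by
      intro u hu g hg
      have hgE : g ∈ Γ.E := hFsub hg.1
      have hsrc : (ch u).1 = g.1 := by rw [hch1 u hu, hg.2]
      have hmemT : Γ.nabla g (ch u) ∈ FT :=
        hT.1.invariant g ((hQ u hu).2 hg) (ch u) (hchP u hu).1.1 hsrc
      have hsrc2 : (Γ.nabla g (ch u)).1 = g.2 := (Γ.nabla_src hgE (hchE u hu) hsrc).2
      have hnotF : Γ.nabla g (ch u) ∉ F := hF.nabla_notMem hg.1 (hchE u hu) hsrc (hchF u hu)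
      exact huniq g.2 (hF.1.tgt_mem g hg.1) _ ⟨hmemT, hsrc2⟩ hnotF
    have hcong2 : ∀ u ∈ W, Γ'.alpha (ch u) - Γ'.alpha e ∈ M := by
      intro u hu
      have hpath := hF.1.connected v hv u hu
      clear hu
      induction hpath with
      | refl => rw [hchv, sub_self]; exact zero_mem M
      | @tail b u hp hstep ih =>
        have hbW : b ∈ W := hF.1.src_mem _ hstep
        have hg : (b, u) ∈ edgeStar F b := ⟨hstep, rfl⟩
        have ht := htrans b hbW _ hg
        obtain ⟨m, hm⟩ := hcong (b, u) (hFsub hstep) (ch b) (hchE b hbW)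
          (by rw [hch1 b hbW])
        rw [show ch u = Γ.nabla (b, u) (ch b) from ht.symm, hm, add_sub_right_comm]
        exact add_mem ih (Submodule.smul_mem _ m
          (hspanle b hbW (Submodule.subset_span ⟨(b, u), hg, rfl⟩)))
    have hsum : ∑ u ∈ Wfin, Γ'.alpha (ch u) = 0 := by
      apply Finset.sum_involution (g := fun u _ => (ch u).2)
      · intro u hu
        have huW : u ∈ W := hWfin.mem_toFinset.mp hu
        rw [hrev u huW, Γ'.opposite (ch u) (by rw [hE]; exact hchE u huW)]
        exact add_neg_cancel _
      · intro u hu _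
        have huW : u ∈ W := hWfin.mem_toFinset.mp hu
        exact fun hcon => Γ.no_loops (ch u) (hchE u huW) ((hch1 u huW).trans hcon.symm)
      · intro u hu
        exact hWfin.mem_toFinset.mpr (hchW u (hWfin.mem_toFinset.mp hu))
      · intro u hu
        have huW : u ∈ W := hWfin.mem_toFinset.mp hu
        rw [hrev u huW]
        exact hch1 u huW
    have hsum2 : ∑ u ∈ Wfin, (Γ'.alpha (ch u) - Γ'.alpha e) ∈ M :=
      Submodule.sum_mem _ fun u hu => hcong2 u (hWfin.mem_toFinset.mp hu)
    have heq : ∑ u ∈ Wfin, (Γ'.alpha (ch u) - Γ'.alpha e)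
        = -((Wfin.card : ℤ) • Γ'.alpha e) := by
      rw [Finset.sum_sub_distrib, hsum, Finset.sum_const, zero_sub, natCast_zsmul]
    rw [heq] at hsum2
    exact neg_mem_iff.mp hsum2
  -- pass to ℚ and compare dimensions
  set φ := ratCastLM (k + s) with hφ
  have hφspan : ∀ (S : Set (Fin (k+s) → ℤ)) (x : Fin (k+s) → ℤ),
      x ∈ Submodule.span ℤ S → φ x ∈ Submodule.span ℚ (φ '' S) := by
    intro S x hx
    have hle : Submodule.span ℤ S ≤
        Submodule.comap φ ((Submodule.span ℚ (φ '' S)).restrictScalars ℤ) := by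
      rw [Submodule.span_le]
      intro y hy
      exact Submodule.subset_span (Set.mem_image_of_mem _ hy)
    exact hle hx
  set T : Set (Fin (k+s) → ℤ) := Γ'.alpha '' edgeStar F v with hTdef
  set MQ : Submodule ℚ (Fin (k+s) → ℚ) := Submodule.span ℚ (φ '' T) with hMQ
  have hMmem : ∀ x, x ∈ M → φ x ∈ MQ := fun x hx => hφspan _ x hx
  have h1 : ∀ x ∈ edgeStar Γ.E v, φ (Γ'.alpha x) ∈ MQ := by
    intro x hx
    by_cases hxF : x ∈ F
    · exact Submodule.subset_span ⟨_, ⟨x, ⟨hxF, hx.2⟩, rfl⟩, rfl⟩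
    · have hk := hkey x hx.1 hx.2 hxF
      have h2 := hMmem _ hk
      rw [map_zsmul, ← Int.cast_smul_eq_zsmul ℚ] at h2
      have hN : ((Wfin.card : ℤ) : ℚ) ≠ 0 := by exact_mod_cast hNpos.ne'
      have h4 := MQ.smul_mem (((Wfin.card : ℤ) : ℚ))⁻¹ h2
      rwa [inv_smul_smul₀ hN] at h4
  have hrank' : Submodule.span ℤ (Γ'.alpha '' edgeStar Γ.E v) = ⊤ := by
    have h := Γ'.rank v
    rwa [hE] at h
  have htop : MQ = ⊤ := by
    rw [eq_top_iff, ← (Pi.basisFun ℚ (Fin (k+s))).span_eq, Submodule.span_le]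
    rintro _ ⟨i, rfl⟩
    rw [Pi.basisFun_apply]
    have hsingle : φ (Pi.single i (1 : ℤ)) = Pi.single i (1 : ℚ) := by
      funext j
      by_cases hji : j = i
      · subst hji; simp [hφ]
      · simp [hφ, Pi.single_eq_of_ne hji]
    have hx : Pi.single i (1 : ℤ) ∈ Submodule.span ℤ (Γ'.alpha '' edgeStar Γ.E v) := by
      rw [hrank']; trivial
    have h5 := hφspan _ _ hx
    have h6 : Submodule.span ℚ (φ '' (Γ'.alpha '' edgeStar Γ.E v)) ≤ MQ := by
      rw [Submodule.span_le]
      rintro _ ⟨y, ⟨x, hx2, rfl⟩, rfl⟩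
      exact h1 x hx2
    rw [← hsingle]
    exact h6 h5
  have hTfin : (φ '' T).Finite := ((hF.2 v hv).1.image _).image _
  have hle : Module.finrank ℚ MQ ≤ k := by
    have hcard : hTfin.toFinset.card ≤ k := by
      rw [← Set.ncard_eq_toFinset_card _ hTfin]
      calc (φ '' T).ncard ≤ T.ncard := Set.ncard_image_le ((hF.2 v hv).1.image _)
        _ ≤ (edgeStar F v).ncard := Set.ncard_image_le (hF.2 v hv).1
        _ = k := (hF.2 v hv).2
    have h8 : MQ = Submodule.span ℚ ↑hTfin.toFinset := by
      rw [hMQ, Set.Finite.coe_toFinset]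
    rw [h8]
    exact le_trans (finrank_span_finset_le_card _) hcard
  have hfr : Module.finrank ℚ MQ = k + s := by
    rw [htop, finrank_top, Module.finrank_fin_fun]
  rw [hfr] at hle
  omega
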